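/- Let G be a finite multidigraph with a subgraph H with vertex set W whose underlying multigraph is two-edge-connected. If π is a partition of the vertex set of G such that the quotient G^π is an oriented cactus, then the quotient H^{π|_W} is also an oriented cactus. -/

import Mathlib

set_option autoImplicit false

/-! ## Multigraphs -/

/-- A multigraph: a vertex type `V`, an edge type `E`, and an assignment to each edge of
its unordered pair of endpoints.  Loops and parallel edges are allowed. -/
structure Multigraph (V E : Type) where
  ends : E → Sym2 V

namespace Multigraph

variable {V E : Type}

/-- `G.ReachAvoid F u v` : `v` can be reached from `u` by a walk using no edge of `F`. -/
inductive ReachAvoid (G : Multigraph V E) (F : Set E) : V → V → Prop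
  | refl (v : V) : ReachAvoid G F v v
  | tail {u v w : V} (e : E) (he : e ∉ F) (hvw : G.ends e = s(v, w))
      (h : ReachAvoid G F u v) : ReachAvoid G F u w

/-- A multigraph is connected if any two vertices are joined by a walk. -/
def Connected (G : Multigraph V E) : Prop := ∀ u v : V, G.ReachAvoid ∅ u v

/-- `F` is a set of edges whose deletion disconnects `v` from `w`. -/
def IsEdgeCut (G : Multigraph V E) (v w : V) (F : Set E) : Prop := ¬ G.ReachAvoid F v w

/-- Edge connectivity `λ(v, w)`: the minimum number of edges whose deletion
disconnects `v` from `w`. -/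
noncomputable def edgeConn (G : Multigraph V E) (v w : V) : ℕ :=
  sInf {k : ℕ | ∃ F : Finset E, F.card = k ∧ G.IsEdgeCut v w ↑F}

/-- Walks in a multigraph, recorded together with the edges they traverse. -/
inductive Walk (G : Multigraph V E) : V → V → Type
  | nil (v : V) : Walk G v v
  | cons {u v w : V} (e : E) (huv : G.ends e = s(u, v)) (p : Walk G v w) : Walk G u w

namespace Walk

variable {G : Multigraph V E}

/-- The list of edges traversed by a walk. -/
def edges : ∀ {u v : V}, G.Walk u v → List E
  | _, _, .nil _ => []
  | _, _, .cons e _ p => e :: edges p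

/-- The list of vertices visited by a walk (including both endpoints). -/
def verts : ∀ {u v : V}, G.Walk u v → List V
  | _, v, .nil _ => [v]
  | u, _, .cons _ _ p => u :: verts p

/-- A walk is a path if it visits no vertex twice. -/
def IsPath {u v : V} (p : G.Walk u v) : Prop := p.verts.Nodup

end Walk

/-- `S` is the edge set of a simple cycle of `G`: a nonempty closed walk with no repeated
edges and no repeated vertices (other than the final return to the starting point).
A loop is a simple cycle of length one. -/
def IsSimpleCycleOn [DecidableEq E] (G : Multigraph V E) (S : Finset E) : Prop :=
  ∃ (v : V) (p : G.Walk v v),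
    p.edges ≠ [] ∧ p.edges.Nodup ∧ p.verts.dropLast.Nodup ∧ p.edges.toFinset = S

/-- A cactus: a connected multigraph in which every edge lies on exactly one simple cycle
(simple cycles being identified with their edge sets). -/
def IsCactus [DecidableEq E] (G : Multigraph V E) : Prop :=
  G.Connected ∧ ∀ e : E, ∃! S : Finset E, G.IsSimpleCycleOn S ∧ e ∈ S

/-- Two-edge-connected: connected, and still connected after deleting any single edge. -/
def TwoEdgeConnected (G : Multigraph V E) : Prop :=
  G.Connected ∧ ∀ (e : E) (u v : V), G.ReachAvoid {e} u v

/-- The quotient multigraph by a partition (setoid) of the vertices: the vertices are the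
blocks, and each edge joins the blocks of its original endpoints. -/
def quot (G : Multigraph V E) (σ : Setoid V) : Multigraph (Quotient σ) E :=
  ⟨fun e => (G.ends e).map (Quotient.mk σ)⟩

/-- Degree of a vertex: the number of edge-incidences at it (loops count twice). -/
def degree [DecidableEq V] [Fintype E] (G : Multigraph V E) (v : V) : ℕ :=
  ∑ e : E,
    Sym2.lift
      ⟨fun a b => (if a = v then 1 else 0) + (if b = v then 1 else 0),
        fun _ _ => add_comm _ _⟩ (G.ends e)

/-- A leaf is a vertex of degree one. -/
def IsLeaf [DecidableEq V] [Fintype E] (G : Multigraph V E) (v : V) : Prop :=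
  G.degree v = 1

/-- A tree: a connected multigraph with no simple cycles. -/
def IsTree [DecidableEq E] (G : Multigraph V E) : Prop :=
  G.Connected ∧ ∀ S : Finset E, ¬ G.IsSimpleCycleOn S

end Multigraph

/-- An embedding of the multigraph `H` into `G`, realizing `H` as a subgraph of `G`. -/
structure Multigraph.Embedding {W F V E : Type} (H : Multigraph W F) (G : Multigraph V E) where
  vmap : W → V
  emap : F → E
  vmap_inj : Function.Injective vmap
  emap_inj : Function.Injective emap
  ends_map : ∀ f : F, G.ends (emap f) = (H.ends f).map vmap

/-! ## Multidigraphs -/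

/-- A multidigraph: vertex type `V`, edge type `E`, and source and target maps. -/
structure Multidigraph (V E : Type) where
  src : E → V
  tgt : E → V

namespace Multidigraph

variable {V E : Type}

/-- The underlying multigraph of a multidigraph. -/
def toMultigraph (D : Multidigraph V E) : Multigraph V E :=
  ⟨fun e => s(D.src e, D.tgt e)⟩

/-- Directed walks in a multidigraph. -/
inductive DiWalk (D : Multidigraph V E) : V → V → Type
  | nil (v : V) : DiWalk D v v
  | cons {u v w : V} (e : E) (hs : D.src e = u) (ht : D.tgt e = v)
      (p : DiWalk D v w) : DiWalk D u w

namespace DiWalk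

variable {D : Multidigraph V E}

/-- The list of edges traversed by a directed walk. -/
def edges : ∀ {u v : V}, D.DiWalk u v → List E
  | _, _, .nil _ => []
  | _, _, .cons e _ _ p => e :: edges p

/-- The list of vertices visited by a directed walk. -/
def verts : ∀ {u v : V}, D.DiWalk u v → List V
  | _, v, .nil _ => [v]
  | u, _, .cons _ _ _ p => u :: verts p

end DiWalk

/-- `S` is the edge set of a simple directed cycle of `D`. -/
def IsDiCycleOn [DecidableEq E] (D : Multidigraph V E) (S : Finset E) : Prop :=
  ∃ (v : V) (p : D.DiWalk v v),
    p.edges ≠ [] ∧ p.edges.Nodup ∧ p.verts.dropLast.Nodup ∧ p.edges.toFinset = S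

/-- An oriented cactus: the underlying multigraph is a cactus and each of its simple
cycles (pads) is a directed cycle. -/
def IsOrientedCactus [DecidableEq E] (D : Multidigraph V E) : Prop :=
  D.toMultigraph.IsCactus ∧
    ∀ S : Finset E, D.toMultigraph.IsSimpleCycleOn S → D.IsDiCycleOn S

/-- The quotient multidigraph by a partition (setoid) of the vertices. -/
def quot (D : Multidigraph V E) (σ : Setoid V) : Multidigraph (Quotient σ) E where
  src := fun e => Quotient.mk σ (D.src e)
  tgt := fun e => Quotient.mk σ (D.tgt e)

/-- Indegree of a vertex: the number of edges with target `v`. -/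
def indeg [DecidableEq V] [Fintype E] (D : Multidigraph V E) (v : V) : ℕ :=
  (Finset.univ.filter fun e => D.tgt e = v).card

/-- Outdegree of a vertex: the number of edges with source `v`. -/
def outdeg [DecidableEq V] [Fintype E] (D : Multidigraph V E) (v : V) : ℕ :=
  (Finset.univ.filter fun e => D.src e = v).card

end Multidigraph

/-- An embedding of the multidigraph `H` into `G`, realizing `H` as a subgraph of `G`. -/
structure Multidigraph.Embedding {W F V E : Type}
    (H : Multidigraph W F) (G : Multidigraph V E) where
  vmap : W → V
  emap : F → E
  vmap_inj : Function.Injective vmap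
  emap_inj : Function.Injective emap
  src_map : ∀ f : F, G.src (emap f) = vmap (H.src f)
  tgt_map : ∀ f : F, G.tgt (emap f) = vmap (H.tgt f)

/-! ## Cycle graphs and non-crossing partitions -/

/-- The cycle graph of length `n`: vertices `Fin n`, edges `Fin n`, edge `i` joining
`v i` and `v (i+1)` (indices mod `n`). -/
def cycleGraph (n : ℕ) [NeZero n] : Multigraph (Fin n) (Fin n) :=
  ⟨fun i => s(i, i + 1)⟩

/-- The cycle graph of length `n` in which each edge carries an orientation:
edge `i` is oriented counterclockwise (from `v i` to `v (i+1)`) if `orient i = true`,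
and clockwise otherwise. -/
def cycleDigraph (n : ℕ) [NeZero n] (orient : Fin n → Bool) : Multidigraph (Fin n) (Fin n) where
  src := fun i => if orient i then i else i + 1
  tgt := fun i => if orient i then i + 1 else i

/-- A relation (e.g. a partition) on `Fin m` is non-crossing if there are no indices
`i₁ < i₂ < i₃ < i₄` with `i₁, i₃` in one block and `i₂, i₄` in a different block. -/
def NonCrossingRel {m : ℕ} (r : Fin m → Fin m → Prop) : Prop :=
  ¬ ∃ i₁ i₂ i₃ i₄ : Fin m, i₁ < i₂ ∧ i₂ < i₃ ∧ i₃ < i₄ ∧ r i₁ i₃ ∧ r i₂ i₄ ∧ ¬ r i₁ i₂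

/-- The union of a partition `σ` of the vertices `v₁, …, vₙ` (at the even positions) and
a partition `κ` of the edges `e₁, …, eₙ` (at the odd positions) of a cycle, as a relation
on the `2n` interlaced points `v₁, e₁, v₂, e₂, …, vₙ, eₙ`. -/
def interRel {n : ℕ} (σ κ : Setoid (Fin n)) (x y : Fin (2 * n)) : Prop :=
  (x.val % 2 = 0 ∧ y.val % 2 = 0 ∧
    σ.r ⟨x.val / 2, by have := x.isLt; omega⟩ ⟨y.val / 2, by have := y.isLt; omega⟩) ∨
  (x.val % 2 = 1 ∧ y.val % 2 = 1 ∧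
    κ.r ⟨x.val / 2, by have := x.isLt; omega⟩ ⟨y.val / 2, by have := y.isLt; omega⟩)

/-- `κ` is the Kreweras complement of `σ`: the largest partition of the edges such that
the union `σ ∪ κ` is non-crossing with respect to the interlaced (cyclic) order. -/
def IsKrewerasComplement {n : ℕ} (σ κ : Setoid (Fin n)) : Prop :=
  NonCrossingRel (interRel σ κ) ∧
    ∀ κ' : Setoid (Fin n), NonCrossingRel (interRel σ κ') → κ' ≤ κ

open Classical in
/-- The block of the partition `κ` containing `i`, as a finite set. -/
noncomputable def setoidClass {n : ℕ} (κ : Setoid (Fin n)) (i : Fin n) : Finset (Fin n) :=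
  Finset.univ.filter fun j => κ.r i j

open Fin.NatCast in
/-- `j` is the next element of `B` encountered strictly after `i` in the cyclic order of
`Fin n` (if `B = {i}` then `j = i` itself, one full turn later). -/
def CyclicNextIn {n : ℕ} [NeZero n] (B : Finset (Fin n)) (i j : Fin n) : Prop :=
  i ∈ B ∧ j ∈ B ∧ ∃ d : ℕ, 0 < d ∧ d ≤ n ∧ j = i + (d : Fin n) ∧
    ∀ d' : ℕ, 0 < d' → d' < d → i + (d' : Fin n) ∉ B

/-! ## Wedges of two (di)graphs at their roots -/

/-- The canonical map from the vertices of `t'` into the wedge vertex type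
`V ⊕ {x : V' // x ≠ ρ'}`, sending the root `ρ'` to (the image of) `ρ`. -/
def wedgeJ {V V' : Type} [DecidableEq V'] (ρ : V) (ρ' : V') :
    V' → V ⊕ {x : V' // x ≠ ρ'} :=
  fun x => if h : x = ρ' then Sum.inl ρ else Sum.inr ⟨x, h⟩

/-- The wedge of two multigraphs `t`, `t'` obtained by identifying `ρ ∈ t` with `ρ' ∈ t'`. -/
def Multigraph.wedge {V E V' E' : Type} [DecidableEq V']
    (t : Multigraph V E) (t' : Multigraph V' E') (ρ : V) (ρ' : V') :
    Multigraph (V ⊕ {x : V' // x ≠ ρ'}) (E ⊕ E') :=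
  ⟨fun e =>
    match e with
    | Sum.inl e => (t.ends e).map Sum.inl
    | Sum.inr e => (t'.ends e).map (wedgeJ ρ ρ')⟩

/-- The wedge of two multidigraphs `t`, `t'` obtained by identifying `ρ ∈ t` with `ρ' ∈ t'`. -/
def Multidigraph.wedge {V E V' E' : Type} [DecidableEq V']
    (t : Multidigraph V E) (t' : Multidigraph V' E') (ρ : V) (ρ' : V') :
    Multidigraph (V ⊕ {x : V' // x ≠ ρ'}) (E ⊕ E') where
  src := fun e =>
    match e with
    | Sum.inl e => Sum.inl (t.src e)
    | Sum.inr e => wedgeJ ρ ρ' (t'.src e)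
  tgt := fun e =>
    match e with
    | Sum.inl e => Sum.inl (t.tgt e)
    | Sum.inr e => wedgeJ ρ ρ' (t'.tgt e)

/-! ## Flowers (a cycle with graphs attached) and stars (trees wedged at a common root) -/

/-- The canonical map from the vertices of the `i`-th attached graph into the flower,
sending the basepoint `b i` to the cycle vertex `i`. -/
def flowerJ {n : ℕ} {W : Fin n → Type} [∀ i, DecidableEq (W i)]
    (b : ∀ i, W i) (i : Fin n) :
    W i → Fin n ⊕ (Σ i, {x : W i // x ≠ b i}) :=
  fun x => if h : x = b i then Sum.inl i else Sum.inr ⟨i, x, h⟩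

/-- The flower: a cycle of length `n` with the multigraph `d i` attached at the cycle
vertex `i` via its basepoint `b i`; the attached graphs are disjoint except through the
cycle, and `d i` meets the cycle exactly in the vertex `i`. -/
def flowerGraph {n : ℕ} [NeZero n] {W F : Fin n → Type} [∀ i, DecidableEq (W i)]
    (d : ∀ i, Multigraph (W i) (F i)) (b : ∀ i, W i) :
    Multigraph (Fin n ⊕ (Σ i, {x : W i // x ≠ b i})) (Fin n ⊕ (Σ i, F i)) :=
  ⟨fun e =>
    match e with
    | Sum.inl k => s(Sum.inl k, Sum.inl (k + 1))
    | Sum.inr ⟨i, f⟩ => ((d i).ends f).map (flowerJ b i)⟩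

/-- The canonical map from the vertices of the `i`-th tree into the star, sending the
root `r i` to the common amalgamated root. -/
def starJ {n : ℕ} {W : Fin n → Type} [∀ i, DecidableEq (W i)]
    (r : ∀ i, W i) (i : Fin n) :
    W i → Unit ⊕ (Σ i, {x : W i // x ≠ r i}) :=
  fun x => if h : x = r i then Sum.inl () else Sum.inr ⟨i, x, h⟩

/-- The star: the disjoint union of the multigraphs `t i` with all the roots `r i`
identified to a single vertex. -/
def starGraph {n : ℕ} {W F : Fin n → Type} [∀ i, DecidableEq (W i)]
    (t : ∀ i, Multigraph (W i) (F i)) (r : ∀ i, W i) :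
    Multigraph (Unit ⊕ (Σ i, {x : W i // x ≠ r i})) (Σ i, F i) :=
  ⟨fun e => ((t e.1).ends e.2).map (starJ r e.1)⟩

/-! ## Graphs of matrices -/

/-- The partition of `V` identifying the input `vin` with the output `vout` (and nothing
else). -/
def rootSetoid {V : Type} (vin vout : V) : Setoid V where
  r a b := a = b ∨ ((a = vin ∨ a = vout) ∧ (b = vin ∨ b = vout))
  iseqv := by
    constructor
    · intro x; exact Or.inl rfl
    · rintro x y (rfl | ⟨hx, hy⟩)
      · exact Or.inl rfl
      · exact Or.inr ⟨hy, hx⟩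
    · rintro x y z (rfl | ⟨hx, hy⟩) (rfl | ⟨hy', hz⟩)
      · exact Or.inl rfl
      · exact Or.inr ⟨hy', hz⟩
      · exact Or.inr ⟨hx, hy⟩
      · exact Or.inr ⟨hx, hz⟩

/-- The graph of matrices `Z_g(A₁, …, A_K)` associated to a bi-rooted multidigraph `g`
with input `vin`, output `vout` and edge ordering `o`. -/
noncomputable def graphOfMatrices {V E : Type} [Fintype V] [Fintype E] [DecidableEq V] {K N : ℕ}
    (g : Multidigraph V E) (vin vout : V) (o : E ≃ Fin K)
    (A : Fin K → Matrix (Fin N) (Fin N) ℂ) : Matrix (Fin N) (Fin N) ℂ :=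
  Matrix.of fun i j =>
    ∑ φ : V → Fin N,
      if φ vout = i ∧ φ vin = j then ∏ e : E, A (o e) (φ (g.tgt e)) (φ (g.src e)) else 0

/-! ## Set partitions as finite set systems -/

/-- `P` is a partition of the (finite) type `V`: its blocks are nonempty and every
element of `V` lies in exactly one block. -/
def IsPartitionOf (V : Type) [DecidableEq V] (P : Finset (Finset V)) : Prop :=
  (∀ B ∈ P, B.Nonempty) ∧ ∀ v : V, ∃! B, B ∈ P ∧ v ∈ B

/-- The block of the partition `P` containing `v`. -/
def blockOf {V : Type} [DecidableEq V] (P : Finset (Finset V)) (hP : IsPartitionOf V P)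
    (v : V) : {B : Finset V // B ∈ P} :=
  ⟨Finset.choose (fun B => v ∈ B) P (hP.2 v),
    Finset.choose_mem (fun B => v ∈ B) P (hP.2 v)⟩

section Aux

lemma dropLast_map_aux {α β : Type*} (f : α → β) :
    ∀ l : List α, (l.map f).dropLast = l.dropLast.map f
  | [] => rfl
  | [_] => rfl
  | a :: b :: l => by
      simp only [List.map_cons, List.dropLast_cons₂]
      exact congrArg (f a :: ·) (dropLast_map_aux f (b :: l))

lemma toFinset_map_aux {α β : Type*} [DecidableEq α] [DecidableEq β] (f : α → β)
    (l : List α) : (l.map f).toFinset = l.toFinset.image f := by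
  ext x; simp

namespace Multigraph
namespace Walk

variable {V E : Type} {G : Multigraph V E}

lemma start_mem_verts : ∀ {u v : V} (p : G.Walk u v), u ∈ p.verts
  | _, _, .nil _ => by simp [verts]
  | _, _, .cons _ _ _ => by simp [verts]

lemma end_mem_verts : ∀ {u v : V} (p : G.Walk u v), v ∈ p.verts
  | _, _, .nil _ => by simp [verts]
  | _, _, .cons _ _ p => by simp only [verts, List.mem_cons]; exact Or.inr (end_mem_verts p)

lemma verts_ne_nil : ∀ {u v : V} (p : G.Walk u v), p.verts ≠ []
  | _, _, .nil _ => by simp [verts]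
  | _, _, .cons _ _ _ => by simp [verts]

lemma verts_eq_dropLast_append : ∀ {u v : V} (p : G.Walk u v),
    p.verts = p.verts.dropLast ++ [v]
  | _, _, .nil _ => rfl
  | _, _, .cons e h p => by
      have hne := verts_ne_nil p
      rw [verts, List.dropLast_cons_of_ne_nil hne]
      rw [List.cons_append]
      exact congrArg _ (verts_eq_dropLast_append p)

lemma mem_verts_of_mem_edges : ∀ {u v : V} (p : G.Walk u v) {e : E} {a b : V},
    e ∈ p.edges → G.ends e = s(a, b) → a ∈ p.verts ∧ b ∈ p.verts
  | _, _, .nil _, _, _, _, he, _ => by simp [edges] at he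
  | u, w, .cons e' h p, e, a, b, he, hab => by
      simp only [edges, List.mem_cons] at he
      simp only [verts, List.mem_cons]
      rcases he with rfl | he
      · rw [hab] at h
        rcases Sym2.eq_iff.mp h with ⟨rfl, rfl⟩ | ⟨rfl, rfl⟩
        · exact ⟨Or.inl rfl, Or.inr p.start_mem_verts⟩
        · exact ⟨Or.inr p.start_mem_verts, Or.inl rfl⟩
      · obtain ⟨ha, hb⟩ := mem_verts_of_mem_edges p he hab
        exact ⟨Or.inr ha, Or.inr hb⟩

lemma IsPath.edges_nodup : ∀ {u v : V} {p : G.Walk u v}, p.IsPath → p.edges.Nodup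
  | _, _, .nil _, _ => by simp [edges]
  | u, w, .cons e h p, hp => by
      simp only [IsPath, verts, List.nodup_cons] at hp
      simp only [edges, List.nodup_cons]
      refine ⟨fun he => ?_, IsPath.edges_nodup hp.2⟩
      exact hp.1 (p.mem_verts_of_mem_edges he h).1

lemma exists_path_suffix : ∀ {v w : V} (q : G.Walk v w), q.IsPath → ∀ u, u ∈ q.verts →
    ∃ q' : G.Walk u w, q'.IsPath ∧ ∀ e ∈ q'.edges, e ∈ q.edges
  | _, _, .nil v, _, u, hu => by
      simp only [verts, List.mem_singleton] at hu
      subst hu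
      exact ⟨.nil _, by simp [IsPath, verts], by simp [edges]⟩
  | v, w, .cons e h p, hq, u, hu => by
      simp only [verts, List.mem_cons] at hu
      rcases hu with rfl | hu
      · exact ⟨.cons e h p, hq, fun _ he => he⟩
      · simp only [IsPath, verts, List.nodup_cons] at hq
        obtain ⟨q', h1, h2⟩ := exists_path_suffix p hq.2 u hu
        exact ⟨q', h1, fun f hf => by simp only [edges, List.mem_cons]; exact Or.inr (h2 f hf)⟩

lemma exists_path : ∀ {u v : V} (p : G.Walk u v),
    ∃ q : G.Walk u v, q.IsPath ∧ ∀ e ∈ q.edges, e ∈ p.edges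
  | _, _, .nil v => ⟨.nil v, by simp [IsPath, verts], by simp [edges]⟩
  | u, w, .cons e h p => by
      obtain ⟨q, hq, hsub⟩ := exists_path p
      by_cases hu : u ∈ q.verts
      · obtain ⟨q', h1, h2⟩ := q.exists_path_suffix hq u hu
        exact ⟨q', h1, fun f hf => by
          simp only [edges, List.mem_cons]; exact Or.inr (hsub f (h2 f hf))⟩
      · refine ⟨.cons e h q, ?_, ?_⟩
        · simp only [IsPath, verts, List.nodup_cons]
          exact ⟨hu, hq⟩
        · intro f hf
          simp only [edges, List.mem_cons] at hf ⊢
          rcases hf with rfl | hf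
          · exact Or.inl rfl
          · exact Or.inr (hsub f hf)

/-- Append two walks. -/
def append : ∀ {u v w : V}, G.Walk u v → G.Walk v w → G.Walk u w
  | _, _, _, .nil _, q => q
  | _, _, _, .cons e h p, q => .cons e h (p.append q)

lemma edges_append : ∀ {u v w : V} (p : G.Walk u v) (q : G.Walk v w),
    (p.append q).edges = p.edges ++ q.edges
  | _, _, _, .nil _, q => rfl
  | _, _, _, .cons e h p, q => by
      simp only [append, edges, List.cons_append]
      exact congrArg _ (edges_append p q)

end Walk

lemma ReachAvoid.exists_walk {V E : Type} {G : Multigraph V E} {F : Set E} {u v : V}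
    (h : G.ReachAvoid F u v) : ∃ p : G.Walk u v, ∀ e ∈ p.edges, e ∉ F := by
  induction h with
  | refl => exact ⟨.nil _, by simp [Walk.edges]⟩
  | tail e he hvw _ ih =>
      obtain ⟨p, hp⟩ := ih
      refine ⟨p.append (.cons e hvw (.nil _)), ?_⟩
      intro f hf
      rw [Walk.edges_append] at hf
      simp only [List.mem_append, Walk.edges, List.mem_singleton, List.mem_cons,
        List.not_mem_nil, or_false] at hf
      rcases hf with hf | rfl
      · exact hp f hf
      · exact he

/-- A multigraph embedding maps walks to walks. -/
lemma Embedding.exists_walk_map {W F V E : Type} {H : Multigraph W F} {G : Multigraph V E}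
    (φ : H.Embedding G) : ∀ {u v : W} (p : H.Walk u v),
    ∃ P : G.Walk (φ.vmap u) (φ.vmap v),
      P.edges = p.edges.map φ.emap ∧ P.verts = p.verts.map φ.vmap
  | _, _, .nil v => ⟨.nil _, rfl, rfl⟩
  | u, w, .cons (v := m) e h p => by
      obtain ⟨P, h1, h2⟩ := φ.exists_walk_map p
      have hends : G.ends (φ.emap e) = s(φ.vmap u, φ.vmap m) := by
        rw [φ.ends_map, h, Sym2.map_pair_eq]
      exact ⟨.cons (φ.emap e) hends P, by simp [Walk.edges, h1],
        by simp [Walk.verts, h2]⟩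

/-- A multigraph embedding maps simple cycles to simple cycles. -/
lemma Embedding.isSimpleCycleOn_image {W F V E : Type} [DecidableEq F] [DecidableEq E]
    {H : Multigraph W F} {G : Multigraph V E} (φ : H.Embedding G) {S : Finset F}
    (hS : H.IsSimpleCycleOn S) : G.IsSimpleCycleOn (S.image φ.emap) := by
  obtain ⟨v, p, hne, hnd, hvd, hts⟩ := hS
  obtain ⟨P, h1, h2⟩ := φ.exists_walk_map p
  refine ⟨φ.vmap v, P, ?_, ?_, ?_, ?_⟩
  · simpa [h1] using hne
  · rw [h1]; exact hnd.map φ.emap_inj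
  · rw [h2, dropLast_map_aux]
    exact hvd.map φ.vmap_inj
  · rw [h1, toFinset_map_aux, hts]

end Multigraph

namespace Multidigraph

/-- The underlying multigraph embedding of a multidigraph embedding. -/
def Embedding.toMultigraph {W F V E : Type} {H : Multidigraph W F} {G : Multidigraph V E}
    (φ : H.Embedding G) : H.toMultigraph.Embedding G.toMultigraph where
  vmap := φ.vmap
  emap := φ.emap
  vmap_inj := φ.vmap_inj
  emap_inj := φ.emap_inj
  ends_map := fun f => by
    simp [Multidigraph.toMultigraph, φ.src_map, φ.tgt_map, Sym2.map_pair_eq]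

/-- Pulling a directed walk back through an embedding when all its edges come from
the subgraph. -/
lemma Embedding.diwalk_pullback {W F V E : Type} {H : Multidigraph W F}
    {G : Multidigraph V E} (φ : H.Embedding G) :
    ∀ {x y : V} (p : G.DiWalk x y) (a b : W), x = φ.vmap a → y = φ.vmap b →
      (∀ e ∈ p.edges, ∃ f, φ.emap f = e) →
      ∃ q : H.DiWalk a b, p.edges = q.edges.map φ.emap ∧ p.verts = q.verts.map φ.vmap
  | _, _, .nil x, a, b, hx, hy, _ => by
      have : a = b := φ.vmap_inj (hx ▸ hy)
      subst this
      exact ⟨.nil a, rfl, by simp [DiWalk.verts, hx]⟩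
  | x, y, .cons e hs ht p, a, b, hx, hy, hall => by
      obtain ⟨f, rfl⟩ := hall e (by simp [DiWalk.edges])
      have ha : a = H.src f := by
        apply φ.vmap_inj
        rw [← hx, ← hs, φ.src_map]
      have hmid : G.tgt (φ.emap f) = φ.vmap (H.tgt f) := φ.tgt_map f
      obtain ⟨q, h1, h2⟩ := φ.diwalk_pullback p (H.tgt f) b (hmid.symm.trans ht).symm hy
        (fun e' he' => hall e' (by simp [DiWalk.edges, he']))
      subst ha
      refine ⟨.cons f rfl rfl q, ?_, ?_⟩
      · simp [DiWalk.edges, h1]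
      · simp [DiWalk.verts, h2, hx]

/-- Quotients preserve walks avoiding an edge set. -/
lemma quot_reachAvoid {V E : Type} (G : Multidigraph V E) (σ : Setoid V) (F : Set E)
    {u v : V} (h : G.toMultigraph.ReachAvoid F u v) :
    (G.quot σ).toMultigraph.ReachAvoid F (Quotient.mk σ u) (Quotient.mk σ v) := by
  induction h with
  | refl => exact .refl _
  | tail e he hvw _ ih =>
      refine .tail e he ?_ ih
      have : s(G.src e, G.tgt e) = s(_, _) := hvw
      rcases Sym2.eq_iff.mp this with ⟨h1, h2⟩ | ⟨h1, h2⟩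
      · show s(Quotient.mk σ (G.src e), Quotient.mk σ (G.tgt e)) = _
        rw [h1, h2]
      · show s(Quotient.mk σ (G.src e), Quotient.mk σ (G.tgt e)) = _
        rw [h1, h2, Sym2.eq_swap]

end Multidigraph

end Aux

/-- If `H` is a subgraph of the multidigraph `G` whose underlying
multigraph is two-edge-connected, and `π` is a partition whose quotient `G^π` is an
oriented cactus, then the quotient `H^{π|_W}` is also an oriented cactus. -/
theorem stmt_7 {V E W F : Type} [DecidableEq E] [DecidableEq F]
    (G : Multidigraph V E) (H : Multidigraph W F) (emb : H.Embedding G)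
    (htec : H.toMultigraph.TwoEdgeConnected) (σ : Setoid V)
    (hcactus : (G.quot σ).IsOrientedCactus) :
    (H.quot (σ.comap emb.vmap)).IsOrientedCactus := by
  classical
  set τ := σ.comap emb.vmap with hτ
  have hvq : ∀ a b : W, τ.r a b → σ.r (emb.vmap a) (emb.vmap b) := fun a b h => h
  set vQ : Quotient τ → Quotient σ := Quotient.map emb.vmap hvq with hvQ
  have vQ_inj : Function.Injective vQ := by
    intro x y
    induction x using Quotient.ind with | _ a =>
    induction y using Quotient.ind with | _ b =>
    intro h
    rw [hvQ, Quotient.map_mk, Quotient.map_mk] at h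
    have hr : σ (emb.vmap a) (emb.vmap b) := Quotient.exact h
    exact Quotient.sound hr
  set φ : (H.quot τ).Embedding (G.quot σ) :=
    { vmap := vQ
      emap := emb.emap
      vmap_inj := vQ_inj
      emap_inj := emb.emap_inj
      src_map := fun f => by
        show Quotient.mk σ (G.src (emb.emap f)) = vQ (Quotient.mk τ (H.src f))
        rw [emb.src_map, hvQ, Quotient.map_mk]
      tgt_map := fun f => by
        show Quotient.mk σ (G.tgt (emb.emap f)) = vQ (Quotient.mk τ (H.tgt f))
        rw [emb.tgt_map, hvQ, Quotient.map_mk] } with hφ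
  -- the quotient of H is two-edge-connected
  have htec' : (H.quot τ).toMultigraph.TwoEdgeConnected := by
    constructor
    · intro x y
      induction x using Quotient.ind with | _ u =>
      induction y using Quotient.ind with | _ v =>
      exact H.quot_reachAvoid τ ∅ (htec.1 u v)
    · intro f x y
      induction x using Quotient.ind with | _ u =>
      induction y using Quotient.ind with | _ v =>
      exact H.quot_reachAvoid τ {f} (htec.2 f u v)
  -- existence of a simple cycle through each edge
  have hexists : ∀ f : F, ∃ S : Finset F,
      (H.quot τ).toMultigraph.IsSimpleCycleOn S ∧ f ∈ S := by
    intro f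
    obtain ⟨p, hp⟩ := (htec'.2 f ((H.quot τ).tgt f) ((H.quot τ).src f)).exists_walk
    obtain ⟨q, hq, hsub⟩ := p.exists_path
    have hf : f ∉ q.edges := fun h => hp f (hsub f h) rfl
    have hends : (H.quot τ).toMultigraph.ends f =
        s((H.quot τ).src f, (H.quot τ).tgt f) := rfl
    refine ⟨(Multigraph.Walk.cons f hends q).edges.toFinset, ⟨_, _, ?_, ?_, ?_, rfl⟩, ?_⟩
    · simp [Multigraph.Walk.edges]
    · simp only [Multigraph.Walk.edges, List.nodup_cons]
      exact ⟨hf, hq.edges_nodup⟩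
    · have hd := q.verts_eq_dropLast_append
      have hnd : q.verts.Nodup := hq
      rw [hd] at hnd
      rw [List.nodup_append] at hnd
      simp only [Multigraph.Walk.verts]
      rw [List.dropLast_cons_of_ne_nil q.verts_ne_nil]
      refine List.nodup_cons.mpr ⟨?_, hnd.1⟩
      intro hmem
      exact hnd.2.2 _ hmem _ (by simp) rfl
    · simp [Multigraph.Walk.edges]
  -- uniqueness of the simple cycle through each edge
  have huniq : ∀ (f : F) (S₁ S₂ : Finset F),
      (H.quot τ).toMultigraph.IsSimpleCycleOn S₁ → f ∈ S₁ →
      (H.quot τ).toMultigraph.IsSimpleCycleOn S₂ → f ∈ S₂ → S₁ = S₂ := by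
    intro f S₁ S₂ h1 hf1 h2 hf2
    obtain ⟨T, _, hTuniq⟩ := hcactus.1.2 (emb.emap f)
    have e1 : S₁.image emb.emap = T :=
      hTuniq _ ⟨φ.toMultigraph.isSimpleCycleOn_image h1, Finset.mem_image_of_mem _ hf1⟩
    have e2 : S₂.image emb.emap = T :=
      hTuniq _ ⟨φ.toMultigraph.isSimpleCycleOn_image h2, Finset.mem_image_of_mem _ hf2⟩
    exact Finset.image_injective emb.emap_inj (e1.trans e2.symm)
  refine ⟨⟨htec'.1, fun f => ?_⟩, ?_⟩
  · obtain ⟨S, hS, hfS⟩ := hexists f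
    exact ⟨S, ⟨hS, hfS⟩, fun S' hS' => huniq f S' S hS'.1 hS'.2 hS hfS⟩
  -- directedness of the cycles
  · intro S hS
    have hT := φ.toMultigraph.isSimpleCycleOn_image hS
    obtain ⟨v', p', hne, hnd, hvd, hts⟩ := hcactus.2 _ hT
    have hall : ∀ e ∈ p'.edges, ∃ f, emb.emap f = e := by
      intro e he
      have : e ∈ Finset.image φ.toMultigraph.emap S := by
        rw [← hts]; exact List.mem_toFinset.mpr he
      obtain ⟨f, _, hfe⟩ := Finset.mem_image.mp this
      exact ⟨f, hfe⟩
    cases p' with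
    | nil => simp [Multidigraph.DiWalk.edges] at hne
    | cons e hs ht rest =>
      obtain ⟨f₀, rfl⟩ := hall e (by simp [Multidigraph.DiWalk.edges])
      have hv' : v' = φ.vmap ((H.quot τ).src f₀) := by
        rw [← hs, φ.src_map]
      obtain ⟨q, h1, h2⟩ := φ.diwalk_pullback (.cons (φ.emap f₀) hs ht rest)
        ((H.quot τ).src f₀) ((H.quot τ).src f₀) hv' hv' hall
      refine ⟨_, q, ?_, ?_, ?_, ?_⟩
      · intro h
        rw [h1, h] at hne
        exact hne rfl
      · have := h1 ▸ hnd
        exact this.of_map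
      · have := h2 ▸ hvd
        rw [dropLast_map_aux] at this
        exact this.of_map
      · have : (q.edges.map (φ.emap)).toFinset = S.image emb.emap := by
          rw [← h1, hts]; exact rfl
        rw [toFinset_map_aux] at this
        exact Finset.image_injective emb.emap_inj this
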